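/- The coefficients of the power series solution u = Ǧ(x) = Σ_{m≥1} Ǧ^{(m)} x^m of the scalar equation u = Č·(u²/R²)/(1 − u/R) + x satisfy Ǧ^{(m)} ≤ (R²/(2(Č+R)))·(4(Č+R)/R²)^m for all m ≥ 1. -/

import Mathlib

open Finset Finset.Nat

lemma myCentralBinom_le_four_pow (n : ℕ) : Nat.centralBinom n ≤ 4 ^ n := by
  induction n with
  | zero => simp [Nat.centralBinom]
  | succ n ih =>
    have h := Nat.succ_mul_centralBinom_succ n
    have h2 : (n + 1) * Nat.centralBinom (n + 1) ≤ (n + 1) * (4 * Nat.centralBinom n) := by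
      rw [h]; nlinarith [Nat.centralBinom_pos n]
    have h3 := Nat.le_of_mul_le_mul_left h2 (Nat.succ_pos n)
    calc Nat.centralBinom (n + 1) ≤ 4 * Nat.centralBinom n := h3
      _ ≤ 4 * 4 ^ n := by exact Nat.mul_le_mul_left 4 ih
      _ = 4 ^ (n + 1) := by ring

lemma myCatalan_le_four_pow (n : ℕ) : catalan n ≤ 4 ^ n := by
  rw [catalan_eq_centralBinom_div]
  exact le_trans (Nat.div_le_self _ _) (myCentralBinom_le_four_pow n)

lemma coeffs_eq_zero (a : ℕ → ℝ) (δ : ℝ) (hδ : 0 < δ)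
    (h : ∀ x : ℝ, |x| < δ → HasSum (fun n => a n * x ^ n) 0) : ∀ n, a n = 0 := by
  set p := FormalMultilinearSeries.ofScalars ℝ a with hp
  have hδ2 : (0 : ℝ) < δ / 2 := by linarith
  set r : NNReal := ⟨δ / 2, hδ2.le⟩ with hr
  have hsummable : Summable (fun n => ‖p n‖ * (r : ℝ) ^ n) := by
    have h1 := ((h (δ / 2) (by rw [abs_of_pos hδ2]; linarith)).summable).abs
    refine h1.congr fun n => ?_
    rw [FormalMultilinearSeries.ofScalars_norm, abs_mul,
      abs_of_nonneg (pow_nonneg hδ2.le n)]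
    rfl
  have hball : HasFPowerSeriesOnBall (fun _ : ℝ => (0 : ℝ)) p 0 r := by
    constructor
    · exact p.le_radius_of_summable hsummable
    · exact_mod_cast hδ2
    · intro y hy
      have hy' : |y| < δ := by
        rw [mem_emetric_ball_zero_iff] at hy
        have : ‖y‖ < (r : ℝ) := by exact_mod_cast hy
        rw [Real.norm_eq_abs] at this
        have hr2 : (r : ℝ) = δ / 2 := rfl
        linarith [this]
      have heq : (fun n : ℕ => p n fun _ : Fin n => y) = fun n => a n * y ^ n := by
        funext n
        rw [hp, FormalMultilinearSeries.ofScalars_apply_eq, smul_eq_mul]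
      rw [heq]
      simpa using h y hy'
  have hz : p = 0 := hball.hasFPowerSeriesAt.eq_zero
  intro n
  have : p n = 0 := by rw [hz]; rfl
  exact (FormalMultilinearSeries.ofScalars_eq_zero ℝ n).mp this

/-- The coefficients Ǧ^{(m)} of the power series solution
u = Ǧ(x) = Σ_{m≥1} Ǧ^{(m)} x^m of the scalar equation
u = Č·(u²/R²)/(1 − u/R) + x, i.e. the nonnegative Taylor coefficients at 0 of
the explicit solution u(x) = (R/(2c))(1 − √(1 − 4cx/R)) with c = Č/R + 1,
satisfy Ǧ^{(m)} ≤ (R²/(2(Č+R)))·(4(Č+R)/R²)^m for all m ≥ 1. -/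
theorem majorant_coefficient_bound (C R : ℝ) (hC : 0 < C) (hR : 0 < R)
    (G : ℕ → ℝ) (hGnonneg : ∀ m, 0 ≤ G m) (hG0 : G 0 = 0)
    (ε : ℝ) (hε : 0 < ε)
    (hsum : ∀ x : ℝ, |x| < ε →
      HasSum (fun m => G m * x ^ m)
        (R / (2 * (C / R + 1)) * (1 - Real.sqrt (1 - 4 * (C / R + 1) * x / R)))) :
    ∀ m : ℕ, 1 ≤ m →
      G m ≤ R ^ 2 / (2 * (C + R)) * (4 * (C + R) / R ^ 2) ^ m := by
  set c : ℝ := C / R + 1 with hcdef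
  have hc1 : 1 < c := by
    have : 0 < C / R := div_pos hC hR
    rw [hcdef]; linarith
  have hc0 : (0 : ℝ) < c := by linarith
  have hR0 : R ≠ 0 := ne_of_gt hR
  have hc0' : c ≠ 0 := ne_of_gt hc0
  clear_value c
  set δ : ℝ := min ε (R / (4 * c)) with hδdef
  have hδ : 0 < δ := lt_min hε (by positivity)
  set conv : ℕ → ℝ := fun n => ∑ kl ∈ antidiagonal n, G kl.1 * G kl.2 with hconvdef
  -- Step 1: recurrence for G from the functional equation
  have key : ∀ x : ℝ, |x| < δ →
      HasSum (fun n => (G n - c / R * conv n - (if n = 1 then 1 else 0)) * x ^ n) 0 := by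
    intro x hx
    have hxε : |x| < ε := lt_of_lt_of_le hx (min_le_left _ _)
    have hxc : 4 * c * x / R < 1 := by
      have h1 : x < R / (4 * c) := lt_of_le_of_lt (le_abs_self x) (lt_of_lt_of_le hx (min_le_right _ _))
      rw [div_lt_one hR]
      calc 4 * c * x < 4 * c * (R / (4 * c)) := by
            apply mul_lt_mul_of_pos_left h1 (by positivity)
        _ = R := by field_simp
    set s : ℝ := Real.sqrt (1 - 4 * c * x / R) with hsdef
    have hs2 : s ^ 2 = 1 - 4 * c * x / R := Real.sq_sqrt (by linarith)
    set f : ℝ := R / (2 * c) * (1 - s) with hfdef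
    clear_value s f
    have h1 : HasSum (fun m => G m * x ^ m) f := by
      rw [hfdef, hsdef]; exact hsum x hxε
    have habs : Summable (fun m => ‖G m * x ^ m‖) := by
      have h2 := (hsum |x| (by rwa [abs_abs])).summable
      refine h2.congr fun n => ?_
      rw [norm_mul, Real.norm_eq_abs, Real.norm_eq_abs,
        abs_of_nonneg (hGnonneg n), abs_pow]
    have hconvsum : HasSum (fun n => conv n * x ^ n) (f * f) := by
      have hs' : Summable (fun n => ∑ kl ∈ antidiagonal n, (G kl.1 * x ^ kl.1) * (G kl.2 * x ^ kl.2)) :=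
        (summable_norm_sum_mul_antidiagonal_of_summable_norm habs habs).of_norm
      have ht := tsum_mul_tsum_eq_tsum_sum_antidiagonal_of_summable_norm habs habs
      rw [h1.tsum_eq] at ht
      have hfun : (fun n => ∑ kl ∈ antidiagonal n, (G kl.1 * x ^ kl.1) * (G kl.2 * x ^ kl.2))
          = fun n => conv n * x ^ n := by
        funext n
        rw [hconvdef]
        rw [Finset.sum_mul]
        apply Finset.sum_congr rfl
        intro kl hkl
        have hn : kl.1 + kl.2 = n := Finset.HasAntidiagonal.mem_antidiagonal.mp hkl
        rw [← hn, pow_add]; ring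
      have := hs'.hasSum
      rw [← ht, hfun] at this
      exact this
    have h3 : HasSum (fun n => (if n = 1 then 1 else 0 : ℝ) * x ^ n) x := by
      have hfe : (fun n : ℕ => (if n = 1 then 1 else 0 : ℝ) * x ^ n)
          = fun n => if n = 1 then x else 0 := by
        funext n
        by_cases hn : n = 1 <;> simp [hn]
      rw [hfe]
      exact hasSum_ite_eq 1 x
    have hcomb := (h1.sub (hconvsum.mul_left (c / R))).sub h3
    have hval : f - c / R * (f * f) - x = 0 := by
      rw [hfdef]
      have hs2' : R * s ^ 2 = R - 4 * c * x := by
        rw [hs2]; field_simp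
      field_simp
      linear_combination (-1) * hs2'
    rw [hval] at hcomb
    refine hcomb.congr_fun fun n => ?_
    ring
  have hrec0 := coeffs_eq_zero _ δ hδ key
  have hrec : ∀ n, G n = c / R * conv n + (if n = 1 then 1 else 0) := by
    intro n
    have h := hrec0 n
    linarith [h]
  set g : ℕ → ℝ := fun n => if n = 0 then 0 else R / c * (catalan (n - 1) : ℝ) * (c / R) ^ n
    with hgdef
  have hg0 : g 0 = 0 := by simp [hgdef]
  have hGg : ∀ n, G n = g n := by
    intro n
    induction n using Nat.strong_induction_on with
    | _ n ih =>
      match n with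
      | 0 => rw [hG0, hg0]
      | 1 =>
        have h1 := hrec 1
        have hconv1 : conv 1 = 0 := by
          rw [hconvdef]
          simp [antidiagonal_succ, hG0]
        rw [hconv1] at h1
        simp only [if_pos rfl] at h1
        rw [h1]
        simp [hgdef]
        field_simp
      | (k + 2) =>
        have h1 := hrec (k + 2)
        have hconveq : conv (k + 2) = ∑ kl ∈ antidiagonal (k + 2), g kl.1 * g kl.2 := by
          rw [hconvdef]
          apply Finset.sum_congr rfl
          intro kl hkl
          obtain ⟨i, j⟩ := kl
          simp only [Finset.HasAntidiagonal.mem_antidiagonal] at hkl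
          rcases Nat.eq_zero_or_pos i with hi | hi
          · subst hi; simp [hG0, hg0]
          rcases Nat.eq_zero_or_pos j with hj | hj
          · subst hj; simp [hG0, hg0]
          have hi' : i < k + 2 := by omega
          have hj' : j < k + 2 := by omega
          simp only
          rw [ih i hi', ih j hj']
        have hcat : (∑ kl ∈ antidiagonal (k + 2), g kl.1 * g kl.2)
            = (R / c) ^ 2 * (c / R) ^ (k + 2) * (catalan (k + 1) : ℝ) := by
          rw [antidiagonal_succ_succ', Finset.sum_cons, Finset.sum_cons, Finset.sum_map]
          have hterm : ∀ kl ∈ antidiagonal k,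
              g ((Function.Embedding.prodMap ⟨Nat.succ, Nat.succ_injective⟩
                ⟨Nat.succ, Nat.succ_injective⟩) kl).1 *
              g ((Function.Embedding.prodMap ⟨Nat.succ, Nat.succ_injective⟩
                ⟨Nat.succ, Nat.succ_injective⟩) kl).2
              = (R / c) ^ 2 * (c / R) ^ (k + 2) * ((catalan kl.1 : ℝ) * (catalan kl.2 : ℝ)) := by
            intro kl hkl
            obtain ⟨i, j⟩ := kl
            simp only [Finset.HasAntidiagonal.mem_antidiagonal] at hkl
            simp only [Function.Embedding.prodMap, Function.Embedding.coeFn_mk, Prod.map_apply]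
            rw [hgdef]
            simp only [Nat.succ_ne_zero, if_false, Nat.succ_eq_add_one, Nat.add_sub_cancel]
            rw [show k + 2 = i + 1 + (j + 1) by omega, pow_add]
            ring
          rw [Finset.sum_congr rfl hterm, ← Finset.mul_sum]
          have hc' : ((catalan (k + 1) : ℕ) : ℝ) = ∑ kl ∈ antidiagonal k, ((catalan kl.1 : ℝ) * (catalan kl.2 : ℝ)) := by
            rw [catalan_succ' k]
            push_cast
            rfl
          rw [hc']
          simp [hg0]
        rw [hconveq, hcat] at h1
        rw [h1]
        have hne : (k + 2 : ℕ) ≠ 1 := by omega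
        rw [if_neg hne, add_zero, hgdef]
        simp only [Nat.succ_ne_zero, if_false, Nat.add_sub_cancel]
        rw [show k + 2 - 1 = k + 1 from rfl]
        field_simp
  intro m hm
  obtain ⟨k, rfl⟩ : ∃ k, m = k + 1 := ⟨m - 1, by omega⟩
  have hcatb : (catalan k : ℝ) ≤ 4 ^ k := by exact_mod_cast myCatalan_le_four_pow k
  have hCR0 : C + R ≠ 0 := by positivity
  have hCR : c = (C + R) / R := by rw [hcdef]; field_simp
  have ht1 : R ^ 2 / (2 * (C + R)) = R / (2 * c) := by
    rw [hCR]; field_simp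
  have ht2 : 4 * (C + R) / R ^ 2 = 4 * c / R := by
    rw [hCR]; field_simp
  rw [ht1, ht2, hGg (k + 1)]
  have hgval : g (k + 1) = R / c * (catalan k : ℝ) * (c / R) ^ (k + 1) := by
    simp [hgdef]
  rw [hgval]
  have h4pos : (0 : ℝ) < 4 * c / R := by positivity
  calc R / c * (catalan k : ℝ) * (c / R) ^ (k + 1)
      ≤ R / c * 4 ^ k * (c / R) ^ (k + 1) := by
        apply mul_le_mul_of_nonneg_right
          (mul_le_mul_of_nonneg_left hcatb (by positivity)) (by positivity)
    _ = R / c * (c / R) * (4 ^ k * (c / R) ^ k) := by rw [pow_succ]; ring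
    _ = (4 * c / R) ^ k := by
        have hone : R / c * (c / R) = 1 := by field_simp
        rw [hone, one_mul, ← mul_pow]
        congr 1
        ring
    _ ≤ 2 * (4 * c / R) ^ k := by nlinarith [pow_pos h4pos k]
    _ = R / (2 * c) * (4 * c / R) ^ (k + 1) := by
        rw [pow_succ]
        field_simp
        ring
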